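/- Let X₁, X₂, … be i.i.d. square-integrable real random variables, τ ∈ (0,1), and let μ̂_{τ,N} denote the unique minimizer over m of (1/N)·Σ_{i=1}^N R_τ(X_i − m). Then μ̂_{τ,N} converges almost surely as N → ∞ to the τ-expectile μ_τ, the unique minimizer of E[R_τ(X₁ − m)]. -/

import Mathlib

open MeasureTheory Filter

noncomputable def Rloss (τ u : ℝ) : ℝ :=
  τ * (max u 0) ^ 2 + (1 - τ) * (max (-u) 0) ^ 2

noncomputable def psiE (τ x m : ℝ) : ℝ :=
  2 * (1 - τ) * max (m - x) 0 - 2 * τ * max (x - m) 0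

lemma max_sub_max_neg (a : ℝ) : max a 0 - max (-a) 0 = a := by
  rcases le_total a 0 with h | h
  · rw [max_eq_right h, max_eq_left (neg_nonneg.mpr h)]; ring
  · rw [max_eq_left h, max_eq_right (neg_nonpos.mpr h)]; ring

lemma hasDerivAt_posPartSq (u : ℝ) :
    HasDerivAt (fun v : ℝ => max v 0 ^ 2) (2 * max u 0) u := by
  rcases lt_trichotomy u 0 with h | h | h
  · rw [max_eq_right h.le, mul_zero]
    have hev : (fun v : ℝ => max v 0 ^ 2) =ᶠ[nhds u] fun _ => (0:ℝ) := by
      filter_upwards [Iio_mem_nhds h] with v hv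
      simp [max_eq_right (Set.mem_Iio.mp hv).le]
    exact (hasDerivAt_const u (0:ℝ)).congr_of_eventuallyEq hev
  · subst h
    rw [show (2:ℝ) * max 0 0 = 0 by simp]
    rw [hasDerivAt_iff_tendsto_slope]
    have hb : ∀ v : ℝ, ‖slope (fun v : ℝ => max v 0 ^ 2) 0 v‖ ≤ |v| := by
      intro v
      rcases eq_or_ne v 0 with rfl | hv
      · simp [slope]
      · rw [slope_def_field]
        simp only [max_self, ne_eq, OfNat.ofNat_ne_zero, not_false_eq_true, zero_pow, sub_zero]
        rw [Real.norm_eq_abs, abs_div]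
        rw [div_le_iff₀ (abs_pos.mpr hv)]
        have h1 : |max v 0 ^ 2| = max v 0 ^ 2 := abs_of_nonneg (sq_nonneg _)
        have h2 : max v 0 ^ 2 ≤ v ^ 2 := by
          rcases le_total v 0 with h | h
          · rw [max_eq_right h]; nlinarith [sq_nonneg v]
          · rw [max_eq_left h]
        rw [h1]
        calc max v 0 ^ 2 ≤ v ^ 2 := h2
          _ = |v| * |v| := by rw [← abs_mul, sq, abs_mul_self]
    refine squeeze_zero_norm hb ?_
    exact (continuous_abs.tendsto' 0 0 abs_zero).mono_left nhdsWithin_le_nhds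
  · have : max u 0 = u := max_eq_left h.le
    rw [this]
    have hev : (fun v : ℝ => max v 0 ^ 2) =ᶠ[nhds u] fun v => v ^ 2 := by
      filter_upwards [Ioi_mem_nhds h] with v hv
      simp [max_eq_left (le_of_lt (Set.mem_Ioi.mp hv))]
    have hp := hasDerivAt_pow 2 u
    norm_num at hp
    exact hp.congr_of_eventuallyEq hev

lemma hasDerivAt_Rloss (τ x m : ℝ) :
    HasDerivAt (fun m => Rloss τ (x - m)) (psiE τ x m) m := by
  have ha : HasDerivAt (fun u : ℝ => max u 0 ^ 2) (2 * max (x - m) 0) (x - m) :=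
    hasDerivAt_posPartSq _
  have hb : HasDerivAt (fun u : ℝ => max (-u) 0 ^ 2) (2 * max (m - x) 0 * (-1)) (x - m) := by
    have h1 := (hasDerivAt_posPartSq (-(x - m))).comp (x - m) (hasDerivAt_neg (x - m))
    simpa [neg_sub, Function.comp_def] using h1
  have houter : HasDerivAt (fun u : ℝ => Rloss τ u)
      (τ * (2 * max (x - m) 0) + (1 - τ) * (2 * max (m - x) 0 * (-1))) (x - m) := by
    exact (ha.const_mul τ).add (hb.const_mul (1 - τ))
  have hinner : HasDerivAt (fun m : ℝ => x - m) (-1) m := by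
    simpa using (hasDerivAt_id m).const_sub x
  have := houter.comp m hinner
  refine this.congr_deriv ?_
  unfold psiE; ring

lemma psiE_mono {τ : ℝ} (h0 : 0 ≤ τ) (h1 : τ ≤ 1) (x : ℝ) {m m' : ℝ} (h : m ≤ m') :
    psiE τ x m + 2 * min τ (1 - τ) * (m' - m) ≤ psiE τ x m' := by
  unfold psiE
  have e1 : max (m - x) 0 - max (x - m) 0 = m - x := by
    have := max_sub_max_neg (m - x); rwa [neg_sub] at this
  have e2 : max (m' - x) 0 - max (x - m') 0 = m' - x := by
    have := max_sub_max_neg (m' - x); rwa [neg_sub] at this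
  have hP : max (m - x) 0 ≤ max (m' - x) 0 := max_le_max (by linarith) le_rfl
  have hQ : max (x - m') 0 ≤ max (x - m) 0 := max_le_max (by linarith) le_rfl
  rcases le_total τ (1 - τ) with hc | hc
  · rw [min_eq_left hc]
    nlinarith [mul_le_mul_of_nonneg_left hP (by linarith : (0:ℝ) ≤ 1 - τ - τ)]
  · rw [min_eq_right hc]
    nlinarith [mul_le_mul_of_nonneg_left hQ (by linarith : (0:ℝ) ≤ τ - (1 - τ))]

lemma abs_psiE_le {τ : ℝ} (h0 : 0 ≤ τ) (h1 : τ ≤ 1) (x m : ℝ) :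
    |psiE τ x m| ≤ 2 * (|x| + |m|) := by
  unfold psiE
  have p1 : max (m - x) 0 ≤ |x| + |m| := by
    apply max_le _ (by positivity)
    linarith [le_abs_self m, neg_le_abs x]
  have p2 : max (x - m) 0 ≤ |x| + |m| := by
    apply max_le _ (by positivity)
    linarith [le_abs_self x, neg_le_abs m]
  have q1 : (0:ℝ) ≤ max (m - x) 0 := le_max_right _ _
  have q2 : (0:ℝ) ≤ max (x - m) 0 := le_max_right _ _
  rw [abs_le]
  constructor
  · nlinarith [mul_le_mul_of_nonneg_left p2 h0, mul_nonneg (by linarith : (0:ℝ) ≤ 1 - τ) q1]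
  · nlinarith [mul_le_mul_of_nonneg_left p1 (by linarith : (0:ℝ) ≤ 1 - τ), mul_nonneg h0 q2]

lemma Rloss_nonneg {τ : ℝ} (h0 : 0 ≤ τ) (h1 : τ ≤ 1) (u : ℝ) : 0 ≤ Rloss τ u := by
  unfold Rloss
  have := sq_nonneg (max u 0)
  have := sq_nonneg (max (-u) 0)
  nlinarith

lemma Rloss_le_sq {τ : ℝ} (h0 : 0 ≤ τ) (h1 : τ ≤ 1) (u : ℝ) : Rloss τ u ≤ u ^ 2 := by
  unfold Rloss
  rcases le_total u 0 with h | h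
  · rw [max_eq_right h, max_eq_left (neg_nonneg.mpr h)]
    nlinarith [sq_nonneg u]
  · rw [max_eq_left h, max_eq_right (neg_nonpos.mpr h)]
    nlinarith [sq_nonneg u]

lemma continuous_Rloss (τ : ℝ) : Continuous (Rloss τ) := by
  unfold Rloss
  exact ((continuous_const.mul ((continuous_id.max continuous_const).pow 2)).add
    (continuous_const.mul ((continuous_neg.max continuous_const).pow 2)))

lemma continuous_psiE (τ m : ℝ) : Continuous fun x => psiE τ x m := by
  unfold psiE
  exact (continuous_const.mul ((continuous_const.sub continuous_id).max continuous_const)).sub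
    (continuous_const.mul ((continuous_id.sub continuous_const).max continuous_const))

theorem stmt9 {Ω : Type*} [MeasurableSpace Ω] (μ : Measure Ω) [IsProbabilityMeasure μ]
    (X : ℕ → Ω → ℝ) (hXmeas : ∀ i, Measurable (X i))
    (hindep : ProbabilityTheory.iIndepFun X μ)
    (hident : ∀ i, ProbabilityTheory.IdentDistrib (X i) (X 0) μ μ)
    (hX2 : Integrable (fun ω => (X 0 ω) ^ 2) μ)
    (τ : ℝ) (hτ : τ ∈ Set.Ioo (0:ℝ) 1)
    (μhat : ℕ → Ω → ℝ)
    (hμhat : ∀ (N : ℕ) (ω : Ω), ∀ m : ℝ,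
      (1 / (N : ℝ)) * ∑ i ∈ Finset.range N, Rloss τ (X i ω - μhat N ω) ≤
        (1 / (N : ℝ)) * ∑ i ∈ Finset.range N, Rloss τ (X i ω - m))
    (μτ : ℝ)
    (hμτ : ∀ m : ℝ, ∫ ω, Rloss τ (X 0 ω - μτ) ∂μ ≤ ∫ ω, Rloss τ (X 0 ω - m) ∂μ) :
    ∀ᵐ ω ∂μ, Tendsto (fun N => μhat N ω) atTop (nhds μτ) := by
  obtain ⟨hτ0, hτ1⟩ := hτ
  set c : ℝ := 2 * min τ (1 - τ) with hc_def
  have hc : 0 < c := by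
    have h := lt_min hτ0 (by linarith : (0:ℝ) < 1 - τ)
    rw [hc_def]; linarith
  have hXmeas0 := hXmeas 0
  -- X 0 is integrable
  have hXint : Integrable (X 0) μ := by
    refine Integrable.mono' ((hX2.add (integrable_const 1)).div_const 2)
      hXmeas0.aestronglyMeasurable ?_
    filter_upwards with ω
    rw [Real.norm_eq_abs]
    simp only [Pi.add_apply]
    nlinarith [sq_nonneg (|X 0 ω| - 1), sq_abs (X 0 ω)]
  -- psiE composed with X 0 is integrable
  have hpsi_meas : ∀ m : ℝ, AEStronglyMeasurable (fun ω => psiE τ (X 0 ω) m) μ := fun m =>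
    ((continuous_psiE τ m).measurable.comp hXmeas0).aestronglyMeasurable
  have hpsi_int : ∀ m : ℝ, Integrable (fun ω => psiE τ (X 0 ω) m) μ := by
    intro m
    refine Integrable.mono' ((hXint.abs.add (integrable_const |m|)).const_mul 2)
      (hpsi_meas m) ?_
    filter_upwards with ω
    rw [Real.norm_eq_abs]
    exact abs_psiE_le hτ0.le hτ1.le _ _
  -- population derivative function H
  set H : ℝ → ℝ := fun m => ∫ ω, psiE τ (X 0 ω) m ∂μ with hH_def
  have Hmono : ∀ m m' : ℝ, m ≤ m' → H m + c * (m' - m) ≤ H m' := by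
    intro m m' h
    have h1 : H m + c * (m' - m) = ∫ ω, (psiE τ (X 0 ω) m + c * (m' - m)) ∂μ := by
      rw [integral_add (hpsi_int m) (integrable_const _), integral_const]
      simp [hH_def]
    rw [h1]
    exact integral_mono ((hpsi_int m).add (integrable_const _)) (hpsi_int m')
      fun ω => psiE_mono hτ0.le hτ1.le (X 0 ω) h
  -- integrability of the loss
  have hRloss_meas : ∀ m : ℝ, AEStronglyMeasurable (fun ω => Rloss τ (X 0 ω - m)) μ := fun m =>
    ((continuous_Rloss τ).measurable.comp (hXmeas0.sub_const m)).aestronglyMeasurable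
  have hRloss_int : ∀ m : ℝ, Integrable (fun ω => Rloss τ (X 0 ω - m)) μ := by
    intro m
    have hsq : Integrable (fun ω => (X 0 ω - m) ^ 2) μ := by
      have he : (fun ω => (X 0 ω - m) ^ 2)
          = fun ω => (X 0 ω) ^ 2 - (2 * m) * X 0 ω + m ^ 2 := by
        funext ω; ring
      rw [he]
      exact (hX2.sub (hXint.const_mul (2 * m))).add (integrable_const _)
    refine Integrable.mono' hsq (hRloss_meas m) ?_
    filter_upwards with ω
    rw [Real.norm_eq_abs, abs_of_nonneg (Rloss_nonneg hτ0.le hτ1.le _)]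
    exact Rloss_le_sq hτ0.le hτ1.le _
  -- derivative of population loss at μτ
  have hLder : HasDerivAt (fun m => ∫ ω, Rloss τ (X 0 ω - m) ∂μ) (H μτ) μτ := by
    have key := hasDerivAt_integral_of_dominated_loc_of_deriv_le (μ := μ) (x₀ := μτ)
      (F := fun m ω => Rloss τ (X 0 ω - m)) (F' := fun m ω => psiE τ (X 0 ω) m)
      (bound := fun ω => 2 * (|X 0 ω| + (|μτ| + 1))) (Metric.ball_mem_nhds μτ one_pos)
      (Eventually.of_forall fun m => hRloss_meas m) (hRloss_int μτ) (hpsi_meas μτ)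
      ?_ ?_ ?_
    · exact key.2
    · filter_upwards with ω
      intro m hm
      rw [Real.norm_eq_abs]
      refine (abs_psiE_le hτ0.le hτ1.le _ _).trans ?_
      have hmb : |m| ≤ |μτ| + 1 := by
        have h1 : |m - μτ| < 1 := by
          rw [Metric.mem_ball, Real.dist_eq] at hm; exact hm
        calc |m| = |m - μτ + μτ| := by ring_nf
          _ ≤ |m - μτ| + |μτ| := abs_add_le _ _
          _ ≤ |μτ| + 1 := by linarith
      linarith [abs_nonneg (X 0 ω)]
    · exact (hXint.abs.add (integrable_const _)).const_mul 2
    · filter_upwards with ω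
      intro m _
      exact hasDerivAt_Rloss τ (X 0 ω) m
  have hH0 : H μτ = 0 := by
    have hmin : IsLocalMin (fun m => ∫ ω, Rloss τ (X 0 ω - m) ∂μ) μτ :=
      Filter.Eventually.of_forall hμτ
    exact hmin.hasDerivAt_eq_zero hLder
  -- SLLN for each m
  have hSLLN : ∀ m : ℝ, ∀ᵐ ω ∂μ,
      Tendsto (fun n : ℕ => (∑ i ∈ Finset.range n, psiE τ (X i ω) m) / n) atTop
        (nhds (H m)) := by
    intro m
    have hgm : Measurable fun x => psiE τ x m := (continuous_psiE τ m).measurable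
    have := ProbabilityTheory.strong_law_ae_real (μ := μ) (fun i ω => psiE τ (X i ω) m)
      (hpsi_int m)
      (fun i j hij => ((hindep.indepFun hij).comp hgm hgm))
      (fun i => (hident i).comp hgm)
    exact this
  -- empirical first-order condition
  have hemp : ∀ (N : ℕ) (ω : Ω), 0 < N →
      ∑ i ∈ Finset.range N, psiE τ (X i ω) (μhat N ω) = 0 := by
    intro N ω hN
    have hNpos : (0:ℝ) < 1 / N := by
      have : (0:ℝ) < N := by exact_mod_cast hN
      positivity
    have hmin : ∀ m, ∑ i ∈ Finset.range N, Rloss τ (X i ω - μhat N ω)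
        ≤ ∑ i ∈ Finset.range N, Rloss τ (X i ω - m) := fun m =>
      le_of_mul_le_mul_left (hμhat N ω m) hNpos
    have hloc : IsLocalMin (fun m => ∑ i ∈ Finset.range N, Rloss τ (X i ω - m)) (μhat N ω) :=
      Filter.Eventually.of_forall hmin
    exact hloc.hasDerivAt_eq_zero (HasDerivAt.fun_sum fun i _ => hasDerivAt_Rloss τ (X i ω) _)
  -- monotonicity of the empirical sums
  have hsum_mono : ∀ (N : ℕ) (ω : Ω) (m m' : ℝ), m ≤ m' →
      ∑ i ∈ Finset.range N, psiE τ (X i ω) m ≤ ∑ i ∈ Finset.range N, psiE τ (X i ω) m' := by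
    intro N ω m m' h
    refine Finset.sum_le_sum fun i _ => ?_
    have h1 := psiE_mono hτ0.le hτ1.le (X i ω) h
    nlinarith [mul_nonneg hc.le (sub_nonneg.mpr h)]
  -- a.s. set
  have hae : ∀ᵐ ω ∂μ, ∀ k : ℕ,
      Tendsto (fun n : ℕ => (∑ i ∈ Finset.range n, psiE τ (X i ω) (μτ - 1 / ((k:ℝ) + 1))) / n)
        atTop (nhds (H (μτ - 1 / ((k:ℝ) + 1)))) ∧
      Tendsto (fun n : ℕ => (∑ i ∈ Finset.range n, psiE τ (X i ω) (μτ + 1 / ((k:ℝ) + 1))) / n)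
        atTop (nhds (H (μτ + 1 / ((k:ℝ) + 1)))) := by
    rw [ae_all_iff]
    intro k
    exact (hSLLN _).and (hSLLN _)
  filter_upwards [hae] with ω hω
  rw [Metric.tendsto_atTop]
  intro ε hε
  obtain ⟨k, hk⟩ := exists_nat_one_div_lt hε
  set δ : ℝ := 1 / ((k:ℝ) + 1) with hδ_def
  have hδpos : 0 < δ := by rw [hδ_def]; positivity
  obtain ⟨h1, h2⟩ := hω k
  have hneg : H (μτ - δ) < 0 := by
    have h := Hmono (μτ - δ) μτ (by linarith)
    have he : μτ - (μτ - δ) = δ := by ring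
    rw [he] at h
    nlinarith [mul_pos hc hδpos]
  have hpos : 0 < H (μτ + δ) := by
    have h := Hmono μτ (μτ + δ) (by linarith)
    have he : μτ + δ - μτ = δ := by ring
    rw [he] at h
    nlinarith [mul_pos hc hδpos]
  have e1 := h1.eventually_lt_const hneg
  have e2 := h2.eventually_const_lt hpos
  obtain ⟨N₀, hN₀⟩ := eventually_atTop.mp (e1.and (e2.and (eventually_ge_atTop 1)))
  refine ⟨N₀, fun n hn => ?_⟩
  obtain ⟨hL, hR, hn1⟩ := hN₀ n hn
  have hnpos : (0:ℝ) < n := by exact_mod_cast hn1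
  have hLsum : ∑ i ∈ Finset.range n, psiE τ (X i ω) (μτ - δ) < 0 := by
    by_contra hcon
    push_neg at hcon
    exact absurd hL (not_lt.mpr (div_nonneg hcon hnpos.le))
  have hRsum : 0 < ∑ i ∈ Finset.range n, psiE τ (X i ω) (μτ + δ) := by
    by_contra hcon
    push_neg at hcon
    exact absurd hR (not_lt.mpr (div_nonpos_iff.mpr (Or.inr ⟨hcon, hnpos.le⟩)))
  have hzero := hemp n ω (by omega)
  have hlt : μτ - δ < μhat n ω := by
    by_contra hcon
    push_neg at hcon
    have := hsum_mono n ω _ _ hcon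
    rw [hzero] at this
    linarith
  have hgt : μhat n ω < μτ + δ := by
    by_contra hcon
    push_neg at hcon
    have := hsum_mono n ω _ _ hcon
    rw [hzero] at this
    linarith
  rw [Real.dist_eq, abs_sub_lt_iff]
  constructor <;> linarith
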